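/- arXiv:1701.02827 — 2 statements merged into one kernel-verified Lean document; each statement's English description precedes it below -/
import Mathlib

section
/- Let Θ be a random variable taking values in the positive integers {1, 2, …}. Then its Shannon entropy satisfies H(Θ) ≤ E[log₂ Θ] + log₂(E[log₂ Θ] + 1) + 1. -/
open MeasureTheory ProbabilityTheory Real
open scoped ENNReal

lemma zeta_partial {β : ℝ} (hβ : 1 < β) (N : ℕ) :
    ∑ i ∈ Finset.range N, (if i = 0 then (0:ℝ) else (i:ℝ) ^ (-β)) ≤ β / (β - 1) := by
  have hβ0 : (0:ℝ) < β - 1 := by linarith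
  have key : ∑ i ∈ Finset.range N, ((i:ℝ) + 2) ^ (-β) ≤ 1 / (β - 1) := by
    have hanti : AntitoneOn (fun x : ℝ => x ^ (-β)) (Set.Icc (1:ℝ) (1 + N)) := by
      intro x hx y hy hxy
      exact Real.rpow_le_rpow_of_nonpos (lt_of_lt_of_le one_pos hx.1) hxy (by linarith)
    have h1 := hanti.sum_le_integral
    have hint : ∫ x in (1:ℝ)..(1 + N), x ^ (-β)
        = ((1 + (N:ℝ)) ^ (-β + 1) - 1 ^ (-β + 1)) / (-β + 1) := by
      rw [integral_rpow]
      right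
      constructor
      · intro h; linarith
      · intro h
        rcases Set.mem_uIcc.1 h with ⟨h1, _⟩ | ⟨_, h2⟩ <;> [linarith; nlinarith [Nat.cast_nonneg (α := ℝ) N]]
    have hbound : ((1 + (N:ℝ)) ^ (-β + 1) - 1 ^ (-β + 1)) / (-β + 1) ≤ 1 / (β - 1) := by
      have h2 : (0:ℝ) ≤ (1 + (N:ℝ)) ^ (-β + 1) :=
        Real.rpow_nonneg (by positivity) _
      have heq : ((1 + (N:ℝ)) ^ (-β + 1) - 1 ^ (-β + 1)) / (-β + 1)
          = (1 - (1 + (N:ℝ)) ^ (-β + 1)) / (β - 1) := by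
        have hne1 : (-β + 1) ≠ 0 := by intro h; linarith
        have hne2 : (β - 1) ≠ 0 := by intro h; linarith
        rw [Real.one_rpow, div_eq_div_iff hne1 hne2]; ring
      rw [heq]
      gcongr
      linarith
    calc ∑ i ∈ Finset.range N, ((i:ℝ) + 2) ^ (-β)
        = ∑ i ∈ Finset.range N, ((1:ℝ) + ((i + 1 : ℕ):ℝ)) ^ (-β) := by
          apply Finset.sum_congr rfl; intro i _; push_cast; ring_nf
      _ ≤ ∫ x in (1:ℝ)..(1 + N), x ^ (-β) := h1
      _ ≤ 1 / (β - 1) := hint ▸ hbound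
  have expand : ∑ i ∈ Finset.range (N + 2), (if i = 0 then (0:ℝ) else (i:ℝ) ^ (-β))
      = (∑ i ∈ Finset.range N, ((i:ℝ) + 2) ^ (-β)) + 1 := by
    rw [Finset.sum_range_succ', Finset.sum_range_succ']
    simp [Real.one_rpow]
    apply Finset.sum_congr rfl; intro i _; push_cast; ring_nf
  have mono : ∑ i ∈ Finset.range N, (if i = 0 then (0:ℝ) else (i:ℝ) ^ (-β))
      ≤ ∑ i ∈ Finset.range (N + 2), (if i = 0 then (0:ℝ) else (i:ℝ) ^ (-β)) := by
    apply Finset.sum_le_sum_of_subset_of_nonneg (Finset.range_subset_range.2 (by omega))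
    intro i _ _
    split <;> [exact le_rfl; positivity]
  have hsplit : β / (β - 1) = 1 / (β - 1) + 1 := by field_simp; ring
  rw [hsplit]
  calc _ ≤ _ := mono
    _ = _ := expand
    _ ≤ 1 / (β - 1) + 1 := by linarith

lemma zeta_bound {β : ℝ} (hβ : 1 < β) :
    ∑' n : ℕ, ENNReal.ofReal (if n = 0 then 0 else (n:ℝ) ^ (-β)) ≤ ENNReal.ofReal (β / (β - 1)) := by
  have hnn : ∀ n : ℕ, 0 ≤ (if n = 0 then (0:ℝ) else (n:ℝ) ^ (-β)) := by
    intro n; split <;> [exact le_rfl; positivity]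
  have hsum : Summable (fun n : ℕ => if n = 0 then (0:ℝ) else (n:ℝ) ^ (-β)) :=
    summable_of_sum_range_le hnn (zeta_partial hβ)
  rw [← ENNReal.ofReal_tsum_of_nonneg hnn hsum]
  exact ENNReal.ofReal_le_ofReal (Summable.tsum_le_of_sum_range_le hsum (zeta_partial hβ))

lemma gibbs_log {p q : ℝ} (hp : 0 ≤ p) (hq : 0 < q) :
    p * Real.log q - p * Real.log p ≤ q - p := by
  rcases hp.eq_or_lt with h | h
  · simp [← h]; linarith
  · have hd := Real.log_le_sub_one_of_pos (div_pos hq h)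
    rw [Real.log_div hq.ne' h.ne'] at hd
    have := mul_le_mul_of_nonneg_left hd hp
    rw [mul_sub] at this
    have hqp : p * (q / p) = q := by field_simp
    nlinarith

/-- Main auxiliary bound: for every `β > 1`,
`H ≤ β * E[log₂ Θ] + log₂ (β/(β-1))`. -/
lemma entropy_le_beta
    {Ω : Type*} [MeasurableSpace Ω] (μ : Measure Ω) [IsProbabilityMeasure μ]
    (Θ : Ω → ℕ) (hΘ : Measurable Θ) (hpos : ∀ᵐ ω ∂μ, 1 ≤ Θ ω)
    (hint : Integrable (fun ω => Real.logb 2 (Θ ω : ℝ)) μ) {β : ℝ} (hβ : 1 < β) :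
    ∑' n : ℕ,
        ENNReal.ofReal
          (-((μ.map Θ {n}).toReal * Real.logb 2 (μ.map Θ {n}).toReal)) ≤
      ENNReal.ofReal
        (β * (∫ ω, Real.logb 2 (Θ ω : ℝ) ∂μ) + Real.logb 2 (β / (β - 1))) := by
  have hβ0 : (0:ℝ) < β - 1 := by linarith
  have hβpos : (0:ℝ) < β := by linarith
  set ν := μ.map Θ with hν
  haveI : IsProbabilityMeasure ν := Measure.isProbabilityMeasure_map hΘ.aemeasurable
  set p : ℕ → ℝ := fun n => (ν {n}).toReal with hp
  set A : ℝ := ∫ ω, Real.logb 2 (Θ ω : ℝ) ∂μ with hA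
  -- the log₂-measurable function on ℕ
  set g : ℕ → ℝ := fun n => Real.logb 2 (n : ℝ) with hg
  have hgm : Measurable g := measurable_from_top
  -- basic facts
  have hν0 : ν {0} = 0 := by
    rw [hν, Measure.map_apply hΘ (measurableSet_singleton 0)]
    refine measure_mono_null ?_ (ae_iff.1 hpos)
    intro ω hω
    simp only [Set.mem_preimage, Set.mem_singleton_iff] at hω
    simp [hω]
  have hp0 : p 0 = 0 := by simp [hp, hν0]
  have hpnn : ∀ n, 0 ≤ p n := fun n => ENNReal.toReal_nonneg
  have hple : ∀ n, p n ≤ 1 := by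
    intro n
    rw [hp]
    exact ENNReal.toReal_le_of_le_ofReal zero_le_one (by simpa using prob_le_one (μ := ν) (s := {n}))
  have hgnn : ∀ n : ℕ, 0 ≤ g n := by
    intro n
    rcases Nat.eq_zero_or_pos n with h | h
    · simp [hg, h]
    · exact Real.logb_nonneg one_lt_two (by exact_mod_cast h)
  have hCnn : 0 ≤ Real.logb 2 (β / (β - 1)) := by
    apply Real.logb_nonneg one_lt_two
    rw [le_div_iff₀ hβ0]; linarith
  set C : ℝ := Real.logb 2 (β / (β - 1)) with hC
  -- reference distribution q
  set q : ℕ → ℝ := fun n => if n = 0 then 0 else (β - 1) / β * (n:ℝ) ^ (-β) with hqdef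
  have hqnn : ∀ n, 0 ≤ q n := by
    intro n; rw [hqdef]; dsimp only; split
    · exact le_rfl
    · positivity
  have hlog2 : (0:ℝ) < Real.log 2 := Real.log_pos one_lt_two
  -- term-wise inequality
  have hterm : ∀ n : ℕ,
      ENNReal.ofReal (-(p n * Real.logb 2 (p n))) + ENNReal.ofReal (p n * (1 / Real.log 2))
        ≤ ENNReal.ofReal (p n * (β * g n + C)) + ENNReal.ofReal (q n * (1 / Real.log 2)) := by
    intro n
    rcases Nat.eq_zero_or_pos n with rfl | hn
    · simp [hp0, hqdef]
    · have hn0 : (0:ℝ) < (n:ℝ) := by exact_mod_cast hn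
      have hqpos : 0 < q n := by
        rw [hqdef]; dsimp only; rw [if_neg (Nat.pos_iff_ne_zero.1 hn)]
        positivity
      -- real inequality
      have hreal : -(p n * Real.logb 2 (p n)) + p n * (1 / Real.log 2)
          ≤ p n * (β * g n + C) + q n * (1 / Real.log 2) := by
        have hgibbs := gibbs_log (hpnn n) hqpos
        -- log (q n) = log((β-1)/β) + (-β) * log n
        have hlq : Real.log (q n) = Real.log ((β - 1) / β) + (-β) * Real.log n := by
          rw [hqdef]; dsimp only; rw [if_neg (Nat.pos_iff_ne_zero.1 hn)]
          rw [Real.log_mul (by positivity) (by positivity), Real.log_rpow hn0]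
        have hlC : Real.log ((β - 1) / β) = - (C * Real.log 2) := by
          rw [hC]; simp only [Real.logb]
          rw [div_mul_cancel₀ _ hlog2.ne', ← Real.log_inv]
          congr 1
          field_simp
        have e1 : -(p n * Real.logb 2 (p n)) + p n * (1 / Real.log 2)
            = (-(p n * Real.log (p n)) + p n) / Real.log 2 := by
          simp only [Real.logb]; field_simp
        have e2 : p n * (β * g n + C) + q n * (1 / Real.log 2)
            = (p n * (β * Real.log n + C * Real.log 2) + q n) / Real.log 2 := by
          rw [hg]; simp only [Real.logb]; field_simp; try ring
        rw [e1, e2]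
        gcongr (?_ : ℝ) / _
        · -- numerator inequality
          rw [hlq, hlC] at hgibbs
          nlinarith [hgibbs]
      -- pass to ENNReal
      have hL1 : 0 ≤ -(p n * Real.logb 2 (p n)) := by
        have := Real.logb_nonpos one_lt_two (hpnn n) (hple n)
        nlinarith [hpnn n]
      have hL2 : 0 ≤ p n * (1 / Real.log 2) := by positivity
      calc ENNReal.ofReal (-(p n * Real.logb 2 (p n))) + ENNReal.ofReal (p n * (1 / Real.log 2))
          = ENNReal.ofReal (-(p n * Real.logb 2 (p n)) + p n * (1 / Real.log 2)) :=
            (ENNReal.ofReal_add hL1 hL2).symm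
        _ ≤ ENNReal.ofReal (p n * (β * g n + C) + q n * (1 / Real.log 2)) :=
            ENNReal.ofReal_le_ofReal hreal
        _ ≤ _ := ENNReal.ofReal_add_le
  -- sum up
  have hsum := ENNReal.tsum_le_tsum hterm
  rw [ENNReal.tsum_add, ENNReal.tsum_add] at hsum
  -- ∑ ν {n} = 1
  have hν1 : ∑' n : ℕ, ν {n} = 1 := by
    have h := lintegral_countable' (μ := ν) (fun _ => (1:ℝ≥0∞))
    simpa using h.symm
  have hofp : ∀ n, ENNReal.ofReal (p n) = ν {n} := fun n =>
    ENNReal.ofReal_toReal (measure_ne_top ν {n})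
  -- ∑ ofReal (p n * c) = ofReal c
  have hmulc : ∀ c : ℝ, 0 ≤ c → ∑' n : ℕ, ENNReal.ofReal (p n * c) = ENNReal.ofReal c := by
    intro c hc
    have : ∀ n : ℕ, ENNReal.ofReal (p n * c) = ν {n} * ENNReal.ofReal c := by
      intro n; rw [ENNReal.ofReal_mul (hpnn n), hofp]
    rw [tsum_congr this, ENNReal.tsum_mul_right, hν1, one_mul]
  -- ∑ ofReal (q n * (1/log 2)) ≤ ofReal (1/log 2)
  have hqsum : ∑' n : ℕ, ENNReal.ofReal (q n * (1 / Real.log 2))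
      ≤ ENNReal.ofReal (1 / Real.log 2) := by
    have hstep : ∀ n : ℕ, ENNReal.ofReal (q n * (1 / Real.log 2))
        = (ENNReal.ofReal ((β - 1) / β) * ENNReal.ofReal (if n = 0 then 0 else (n:ℝ) ^ (-β)))
          * ENNReal.ofReal (1 / Real.log 2) := by
      intro n
      rw [ENNReal.ofReal_mul (hqnn n)]
      congr 1
      rw [hqdef]; dsimp only
      split
      · simp
      · rw [ENNReal.ofReal_mul (by positivity)]
    rw [tsum_congr hstep, ENNReal.tsum_mul_right, ENNReal.tsum_mul_left]
    calc ENNReal.ofReal ((β - 1) / β) * (∑' n : ℕ, ENNReal.ofReal (if n = 0 then 0 else (n:ℝ) ^ (-β)))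
          * ENNReal.ofReal (1 / Real.log 2)
        ≤ ENNReal.ofReal ((β - 1) / β) * ENNReal.ofReal (β / (β - 1))
          * ENNReal.ofReal (1 / Real.log 2) := by
          gcongr
          exact zeta_bound hβ
      _ = ENNReal.ofReal (1 / Real.log 2) := by
          rw [← ENNReal.ofReal_mul (by positivity)]
          have : (β - 1) / β * (β / (β - 1)) = 1 := by field_simp
          rw [this, ENNReal.ofReal_one, one_mul]
  -- ∑ ofReal (p n * (β g n + C)) = ofReal (β A) + ofReal C
  have hmain : ∑' n : ℕ, ENNReal.ofReal (p n * (β * g n + C))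
      ≤ ENNReal.ofReal (β * A + C) := by
    have hsplit : ∀ n : ℕ, ENNReal.ofReal (p n * (β * g n + C))
        = ENNReal.ofReal β * (ENNReal.ofReal (g n) * ν {n}) + ENNReal.ofReal (p n * C) := by
      intro n
      have h1 : p n * (β * g n + C) = β * (p n * g n) + p n * C := by ring
      rw [h1, ENNReal.ofReal_add (mul_nonneg hβpos.le (mul_nonneg (hpnn n) (hgnn n)))
        (mul_nonneg (hpnn n) hCnn),
        ENNReal.ofReal_mul hβpos.le, ENNReal.ofReal_mul (hpnn n), hofp]
      ring_nf
    rw [tsum_congr hsplit, ENNReal.tsum_add, ENNReal.tsum_mul_left, hmulc C hCnn]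
    -- lintegral identity
    have hint2 : Integrable g ν := by
      rw [hν, integrable_map_measure hgm.aestronglyMeasurable.aemeasurable.aestronglyMeasurable
        hΘ.aemeasurable]
      exact hint
    have hlin : ∑' n : ℕ, ENNReal.ofReal (g n) * ν {n} = ENNReal.ofReal A := by
      rw [← lintegral_countable' (μ := ν) (fun n => ENNReal.ofReal (g n))]
      rw [← ofReal_integral_eq_lintegral_ofReal hint2 (ae_of_all _ hgnn)]
      congr 1
      rw [hA, hν, integral_map hΘ.aemeasurable hgm.aestronglyMeasurable]
    rw [hlin, ← ENNReal.ofReal_mul hβpos.le]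
    have hβA : 0 ≤ β * A := by
      apply mul_nonneg hβpos.le
      rw [hA]
      apply integral_nonneg_of_ae
      filter_upwards [hpos] with ω hω
      exact Real.logb_nonneg one_lt_two (by exact_mod_cast hω)
    rw [← ENNReal.ofReal_add hβA hCnn]
  -- put together and cancel
  have hfinal : (∑' n : ℕ, ENNReal.ofReal (-(p n * Real.logb 2 (p n))))
      + ENNReal.ofReal (1 / Real.log 2)
      ≤ ENNReal.ofReal (β * A + C) + ENNReal.ofReal (1 / Real.log 2) := by
    calc (∑' n : ℕ, ENNReal.ofReal (-(p n * Real.logb 2 (p n))))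
          + ENNReal.ofReal (1 / Real.log 2)
        = (∑' n : ℕ, ENNReal.ofReal (-(p n * Real.logb 2 (p n))))
          + ∑' n : ℕ, ENNReal.ofReal (p n * (1 / Real.log 2)) := by
          rw [hmulc _ (by positivity)]
      _ ≤ (∑' n : ℕ, ENNReal.ofReal (p n * (β * g n + C)))
          + ∑' n : ℕ, ENNReal.ofReal (q n * (1 / Real.log 2)) := hsum
      _ ≤ ENNReal.ofReal (β * A + C) + ENNReal.ofReal (1 / Real.log 2) :=
          add_le_add hmain hqsum
  exact (ENNReal.add_le_add_iff_right (by simp)).1 hfinal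

/-- **Maximum-entropy bound** (Appendix B of the paper): for a random variable `Θ` taking
values in the positive integers `{1,2,…}`, the Shannon entropy (in bits, computed in `ℝ≥0∞`
as the sum of the nonnegative terms `−p(θ) log₂ p(θ)`) satisfies
`H(Θ) ≤ E[log₂ Θ] + log₂(E[log₂ Θ] + 1) + 1`. -/
theorem entropy_le_expected_log_add
    {Ω : Type*} [MeasurableSpace Ω] (μ : Measure Ω) [IsProbabilityMeasure μ]
    (Θ : Ω → ℕ) (hΘ : Measurable Θ) (hpos : ∀ᵐ ω ∂μ, 1 ≤ Θ ω)
    (hint : Integrable (fun ω => Real.logb 2 (Θ ω : ℝ)) μ) :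
    ∑' n : ℕ,
        ENNReal.ofReal
          (-((μ.map Θ {n}).toReal * Real.logb 2 (μ.map Θ {n}).toReal)) ≤
      ENNReal.ofReal
        ((∫ ω, Real.logb 2 (Θ ω : ℝ) ∂μ) +
          Real.logb 2 ((∫ ω, Real.logb 2 (Θ ω : ℝ) ∂μ) + 1) + 1) := by
  set A : ℝ := ∫ ω, Real.logb 2 (Θ ω : ℝ) ∂μ with hA
  have hA0 : 0 ≤ A := by
    apply integral_nonneg_of_ae
    filter_upwards [hpos] with ω hω
    exact Real.logb_nonneg one_lt_two (by exact_mod_cast hω)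
  rcases hA0.eq_or_lt with h | h
  · -- A = 0 : use β = 2
    have := entropy_le_beta μ Θ hΘ hpos hint (β := 2) one_lt_two
    refine this.trans (ENNReal.ofReal_le_ofReal ?_)
    rw [← hA, ← h]
    norm_num [Real.logb_self_eq_one]
  · -- A > 0 : use β = (A+1)/A
    have hβ : 1 < (A + 1) / A := by
      rw [lt_div_iff₀ h]; linarith
    have := entropy_le_beta μ Θ hΘ hpos hint hβ
    refine this.trans_eq ?_
    congr 1
    rw [← hA]
    have h1 : (A + 1) / A * A = A + 1 := by field_simp
    have h2 : (A + 1) / A / ((A + 1) / A - 1) = A + 1 := by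
      rw [div_eq_iff]
      · field_simp; ring
      · intro hzero
        have : (A + 1) / A = 1 := by linarith
        rw [div_eq_one_iff_eq h.ne'] at this
        linarith
    rw [h1, h2]
    ring
end

section
/- Subadditivity of excess functional information: if the pair (X₁,Y₁) is independent of the pair (X₂,Y₂), then Ψ((X₁,X₂) → (Y₁,Y₂)) ≤ Ψ(X₁ → Y₁) + Ψ(X₂ → Y₂). -/
open MeasureTheory ProbabilityTheory Real
open scoped ENNReal

noncomputable section
open Classical in

/-- Kullback–Leibler divergence in bits (base-2 logarithm). -/
def klBits {α : Type*} [MeasurableSpace α] (P Q : Measure α) : ℝ≥0∞ :=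
  if P ≪ Q ∧ Integrable (fun x => Real.logb 2 (P.rnDeriv Q x).toReal) P
  then ENNReal.ofReal (∫ x, Real.logb 2 (P.rnDeriv Q x).toReal ∂P)
  else ⊤

/-- Mutual information `I(X;Y)` in bits: the KL divergence between the joint law and the
product of the marginal laws. -/
def miBits {Ω 𝒳 𝒴 : Type*} [MeasurableSpace Ω] [MeasurableSpace 𝒳] [MeasurableSpace 𝒴]
    (μ : Measure Ω) (X : Ω → 𝒳) (Y : Ω → 𝒴) : ℝ≥0∞ :=
  klBits (μ.map (fun ω => (X ω, Y ω))) ((μ.map X).prod (μ.map Y))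

/-- Conditional mutual information `I(X;Z|Y)` in bits, defined via the chain rule
`I(X;Z|Y) = I(X;(Z,Y)) - I(X;Y)`. -/
def cmiBits {Ω 𝒳 𝒵 𝒴 : Type*} [MeasurableSpace Ω] [MeasurableSpace 𝒳] [MeasurableSpace 𝒵]
    [MeasurableSpace 𝒴] (μ : Measure Ω) (X : Ω → 𝒳) (Z : Ω → 𝒵) (Y : Ω → 𝒴) : ℝ≥0∞ :=
  miBits μ X (fun ω => (Z ω, Y ω)) - miBits μ X Y

/-- Entropy `H(X)` in bits, as `I(X;X)` (equals the Shannon entropy for discrete `X`,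
and `∞` otherwise). -/
def entBits {Ω 𝒳 : Type*} [MeasurableSpace Ω] [MeasurableSpace 𝒳]
    (μ : Measure Ω) (X : Ω → 𝒳) : ℝ≥0∞ :=
  miBits μ X X

/-- Conditional entropy `H(Y|Z)` in bits, as `I(Y;Y|Z)`. -/
def condEntBits {Ω 𝒴 𝒵 : Type*} [MeasurableSpace Ω] [MeasurableSpace 𝒴] [MeasurableSpace 𝒵]
    (μ : Measure Ω) (Y : Ω → 𝒴) (Z : Ω → 𝒵) : ℝ≥0∞ :=
  cmiBits μ Y Y Z

/-- Mutual information of a joint distribution on a product space. -/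
def miOfJoint {𝒳 𝒴 : Type*} [MeasurableSpace 𝒳] [MeasurableSpace 𝒴]
    (ν : Measure (𝒳 × 𝒴)) : ℝ≥0∞ :=
  miBits ν Prod.fst Prod.snd

/-- **Excess functional information** `Ψ(X→Y)` of a joint law `ν` on `𝒳 × 𝒴`:
the infimum of `I(X;Z|Y)` over all random variables `Z` independent of `X` such that `Y` is
a.s. a measurable function of `(X,Z)`.  `Z` is realized on the canonical extension
`𝒳 × 𝒴 × ℝ` of the joint law, `ℝ` serving as a universal standard Borel value space. -/
def excessFI {𝒳 𝒴 : Type*} [MeasurableSpace 𝒳] [MeasurableSpace 𝒴]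
    (ν : Measure (𝒳 × 𝒴)) : ℝ≥0∞ :=
  sInf { r : ℝ≥0∞ |
    ∃ ρ : Measure (𝒳 × 𝒴 × ℝ), IsProbabilityMeasure ρ ∧
      ρ.map (fun p => (p.1, p.2.1)) = ν ∧
      IndepFun (fun p : 𝒳 × 𝒴 × ℝ => p.1) (fun p => p.2.2) ρ ∧
      (∃ g : 𝒳 × ℝ → 𝒴, Measurable g ∧
        (fun p : 𝒳 × 𝒴 × ℝ => p.2.1) =ᵐ[ρ] fun p => g (p.1, p.2.2)) ∧
      r = cmiBits ρ (fun p : 𝒳 × 𝒴 × ℝ => p.1) (fun p => p.2.2) (fun p => p.2.1) }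

/-- Excess functional information `Ψ(X→Y)` of a pair of random variables. -/
def excessFIRV {Ω 𝒳 𝒴 : Type*} [MeasurableSpace Ω] [MeasurableSpace 𝒳] [MeasurableSpace 𝒴]
    (μ : Measure Ω) (X : Ω → 𝒳) (Y : Ω → 𝒴) : ℝ≥0∞ :=
  excessFI (μ.map (fun ω => (X ω, Y ω)))


noncomputable def realPairEquiv : (ℝ × ℝ) ≃ᵐ ℝ := by
  have hR : ¬Countable ℝ := by
    intro h
    exact Cardinal.not_countable_real Set.countable_univ
  refine PolishSpace.measurableEquivOfNotCountable (fun h => hR ?_) hR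
  haveI := h
  exact Function.Injective.countable (f := fun x : ℝ => ((x, 0) : ℝ × ℝ))
    (fun a b hab => congrArg Prod.fst hab)

lemma le_sInf_add_sInf {S₁ S₂ : Set ℝ≥0∞} {c : ℝ≥0∞}
    (h : ∀ r₁ ∈ S₁, ∀ r₂ ∈ S₂, c ≤ r₁ + r₂) : c ≤ sInf S₁ + sInf S₂ := by
  rw [ENNReal.sInf_add]
  refine le_iInf₂ fun r₁ h₁ => ?_
  rw [add_comm, ENNReal.sInf_add]
  refine le_iInf₂ fun r₂ h₂ => ?_
  rw [add_comm]
  exact h r₁ h₁ r₂ h₂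

lemma tsub_add_tsub_le' {a₁ a₂ b₁ b₂ : ℝ≥0∞} :
    (a₁ + a₂) - (b₁ + b₂) ≤ (a₁ - b₁) + (a₂ - b₂) := by
  rw [tsub_le_iff_right]
  calc a₁ + a₂ ≤ ((a₁ - b₁) + b₁) + ((a₂ - b₂) + b₂) :=
        add_le_add le_tsub_add le_tsub_add
    _ = (a₁ - b₁) + (a₂ - b₂) + (b₁ + b₂) := add_add_add_comm _ _ _ _


section Aux
variable {α β : Type*} [MeasurableSpace α] [MeasurableSpace β]

lemma measurable_logbRn (P Q : Measure α) :
    Measurable (fun x => Real.logb 2 (P.rnDeriv Q x).toReal) := by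
  simp only [Real.logb]
  exact (Real.measurable_log.comp (P.measurable_rnDeriv Q).ennreal_toReal).div_const _

lemma mul_ofReal_toReal_inv_le (a : ℝ≥0∞) : a * ENNReal.ofReal (a.toReal)⁻¹ ≤ 1 := by
  rcases eq_or_ne a 0 with rfl | h0
  · simp
  rcases eq_or_ne a ⊤ with rfl | ht
  · simp
  · rw [ENNReal.ofReal_inv_of_pos (ENNReal.toReal_pos h0 ht), ENNReal.ofReal_toReal ht,
      ENNReal.mul_inv_cancel h0 ht]

/-- Gibbs' inequality: the KL integrand has nonnegative integral. -/
lemma integral_logbRn_nonneg (P Q : Measure α) [IsProbabilityMeasure P] [IsProbabilityMeasure Q]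
    (hac : P ≪ Q) (hi : Integrable (fun x => Real.logb 2 (P.rnDeriv Q x).toReal) P) :
    0 ≤ ∫ x, Real.logb 2 (P.rnDeriv Q x).toReal ∂P := by
  set h : α → ℝ := fun x => (P.rnDeriv Q x).toReal with hh
  have hlog2 : Real.log 2 ≠ 0 := by
    simp only [ne_eq, Real.log_eq_zero]
    norm_num
  have hlog_int : Integrable (fun x => Real.log (h x)) P := by
    have := hi.const_mul (Real.log 2)
    refine this.congr (Filter.Eventually.of_forall fun x => ?_)
    simp only [Real.logb]
    rw [mul_comm, div_mul_cancel₀ _ hlog2]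
  have hpos : ∀ᵐ x ∂P, 0 < h x := by
    filter_upwards [Measure.rnDeriv_pos hac, hac.ae_le (Measure.rnDeriv_lt_top P Q)]
      with x h1 h2
    exact ENNReal.toReal_pos h1.ne' h2.ne
  have hinv_meas : Measurable fun x => (h x)⁻¹ :=
    (P.measurable_rnDeriv Q).ennreal_toReal.inv
  have hinv_lint : ∫⁻ x, ENNReal.ofReal (h x)⁻¹ ∂P ≤ 1 := by
    conv_lhs => rw [← Measure.withDensity_rnDeriv_eq P Q hac]
    rw [lintegral_withDensity_eq_lintegral_mul Q (P.measurable_rnDeriv Q)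
      hinv_meas.ennreal_ofReal]
    calc ∫⁻ x, P.rnDeriv Q x * ENNReal.ofReal (h x)⁻¹ ∂Q
        ≤ ∫⁻ _, 1 ∂Q := lintegral_mono fun x => mul_ofReal_toReal_inv_le _
      _ = 1 := by simp
  have hinv_int : Integrable (fun x => (h x)⁻¹) P := by
    refine ⟨hinv_meas.aestronglyMeasurable, ?_⟩
    rw [hasFiniteIntegral_iff_ofReal (Filter.Eventually.of_forall fun x =>
      inv_nonneg.2 ENNReal.toReal_nonneg)]
    exact lt_of_le_of_lt hinv_lint ENNReal.one_lt_top
  have hmono : ∀ᵐ x ∂P, -Real.log (h x) ≤ (h x)⁻¹ - 1 := by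
    filter_upwards [hpos] with x hx
    have := Real.log_le_sub_one_of_pos (inv_pos.mpr hx)
    rwa [Real.log_inv] at this
  have hint_le : ∫ x, (h x)⁻¹ ∂P ≤ 1 := by
    rw [integral_eq_lintegral_of_nonneg_ae (Filter.Eventually.of_forall fun x =>
      inv_nonneg.2 ENNReal.toReal_nonneg) hinv_meas.aestronglyMeasurable]
    calc (∫⁻ x, ENNReal.ofReal (h x)⁻¹ ∂P).toReal ≤ (1 : ℝ≥0∞).toReal :=
          ENNReal.toReal_mono ENNReal.one_ne_top hinv_lint
      _ = 1 := by simp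
  have hstep := integral_mono_ae hlog_int.neg (hinv_int.sub (integrable_const 1)) hmono
  simp only [Pi.neg_apply, Pi.sub_apply] at hstep
  rw [integral_neg, integral_sub hinv_int (integrable_const 1), integral_const,
    probReal_univ, smul_eq_mul, one_mul] at hstep
  have hGibbs : 0 ≤ ∫ x, Real.log (h x) ∂P := by linarith
  have : ∫ x, Real.logb 2 (h x) ∂P = (∫ x, Real.log (h x) ∂P) / Real.log 2 := by
    simp only [Real.logb]
    exact integral_div _ _
  rw [this]
  exact div_nonneg hGibbs (Real.log_nonneg one_le_two)

end Aux

section KL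
variable {α β : Type*} [MeasurableSpace α] [MeasurableSpace β]

lemma absolutelyContinuous_map_equiv_iff (e : α ≃ᵐ β) {P Q : Measure α} :
    P.map e ≪ Q.map e ↔ P ≪ Q := by
  constructor
  · intro h
    have := h.map e.symm.measurable
    rwa [MeasurableEquiv.map_symm_map, MeasurableEquiv.map_symm_map] at this
  · exact fun h => h.map e.measurable

lemma klBits_map_equiv (e : α ≃ᵐ β) (P Q : Measure α)
    [IsProbabilityMeasure P] [IsProbabilityMeasure Q] :
    klBits (P.map e) (Q.map e) = klBits P Q := by
  have h1 : IsProbabilityMeasure (P.map e) := Measure.isProbabilityMeasure_map e.measurable.aemeasurable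
  have h2 : IsProbabilityMeasure (Q.map e) := Measure.isProbabilityMeasure_map e.measurable.aemeasurable
  by_cases hac : P ≪ Q
  · have hacm : P.map e ≪ Q.map e := hac.map e.measurable
    have hrn : (fun x => (P.map e).rnDeriv (Q.map e) (e x)) =ᵐ[P] P.rnDeriv Q :=
      hac.ae_le (e.measurableEmbedding.rnDeriv_map P Q)
    have hcong : (fun x => Real.logb 2 ((P.map e).rnDeriv (Q.map e) (e x)).toReal)
        =ᵐ[P] (fun x => Real.logb 2 (P.rnDeriv Q x).toReal) := by
      filter_upwards [hrn] with x hx; rw [hx]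
    have hIiff : Integrable (fun y => Real.logb 2 ((P.map e).rnDeriv (Q.map e) y).toReal)
        (P.map e) ↔ Integrable (fun x => Real.logb 2 (P.rnDeriv Q x).toReal) P := by
      rw [e.measurableEmbedding.integrable_map_iff]
      exact integrable_congr hcong
    have hIeq : ∫ y, Real.logb 2 ((P.map e).rnDeriv (Q.map e) y).toReal ∂(P.map e)
        = ∫ x, Real.logb 2 (P.rnDeriv Q x).toReal ∂P := by
      rw [integral_map e.measurable.aemeasurable
        (measurable_logbRn _ _).aestronglyMeasurable]
      exact integral_congr_ae hcong
    by_cases hi : Integrable (fun x => Real.logb 2 (P.rnDeriv Q x).toReal) P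
    · rw [klBits, klBits, if_pos ⟨hacm, hIiff.mpr hi⟩, if_pos ⟨hac, hi⟩, hIeq]
    · rw [klBits, klBits, if_neg (fun hcon => hi (hIiff.mp hcon.2)),
        if_neg (fun hcon => hi hcon.2)]
  · have hacm : ¬ (P.map e ≪ Q.map e) := fun h =>
      hac ((absolutelyContinuous_map_equiv_iff e).mp h)
    rw [klBits, klBits, if_neg (fun h => hacm h.1), if_neg (fun h => hac h.1)]

end KL

section ProdKL
variable {α β : Type*} [MeasurableSpace α] [MeasurableSpace β]

lemma absolutelyContinuous_of_prod {P₁ Q₁ : Measure α} {P₂ Q₂ : Measure β}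
    [IsProbabilityMeasure P₁] [IsProbabilityMeasure P₂]
    [IsProbabilityMeasure Q₁] [IsProbabilityMeasure Q₂]
    (h : P₁.prod P₂ ≪ Q₁.prod Q₂) : P₁ ≪ Q₁ ∧ P₂ ≪ Q₂ := by
  constructor
  · refine Measure.AbsolutelyContinuous.mk fun s hs hs0 => ?_
    have h0 : (Q₁.prod Q₂) (s ×ˢ Set.univ) = 0 := by
      rw [Measure.prod_prod, hs0, zero_mul]
    have h1 := h h0
    rwa [Measure.prod_prod, measure_univ, mul_one] at h1
  · refine Measure.AbsolutelyContinuous.mk fun s hs hs0 => ?_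
    have h0 : (Q₁.prod Q₂) (Set.univ ×ˢ s) = 0 := by
      rw [Measure.prod_prod, hs0, mul_zero]
    have h1 := h h0
    rwa [Measure.prod_prod, measure_univ, one_mul] at h1

lemma rnDeriv_prod_ae {P₁ Q₁ : Measure α} {P₂ Q₂ : Measure β}
    [IsProbabilityMeasure P₁] [IsProbabilityMeasure P₂]
    [IsProbabilityMeasure Q₁] [IsProbabilityMeasure Q₂]
    (h₁ : P₁ ≪ Q₁) (h₂ : P₂ ≪ Q₂) :
    (P₁.prod P₂).rnDeriv (Q₁.prod Q₂) =ᵐ[Q₁.prod Q₂]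
      fun z => P₁.rnDeriv Q₁ z.1 * P₂.rnDeriv Q₂ z.2 := by
  have hF : Measurable fun z : α × β => P₁.rnDeriv Q₁ z.1 * P₂.rnDeriv Q₂ z.2 :=
    ((P₁.measurable_rnDeriv Q₁).comp measurable_fst).mul
      ((P₂.measurable_rnDeriv Q₂).comp measurable_snd)
  have hwd : P₁.prod P₂ = 0 + (Q₁.prod Q₂).withDensity
      (fun z => P₁.rnDeriv Q₁ z.1 * P₂.rnDeriv Q₂ z.2) := by
    rw [zero_add]
    refine Measure.prod_eq (μ := P₁) (ν := P₂) fun s t hs ht => ?_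
    rw [withDensity_apply _ (hs.prod ht), ← Measure.prod_restrict,
      lintegral_prod_mul (P₁.measurable_rnDeriv Q₁).aemeasurable
        (P₂.measurable_rnDeriv Q₂).aemeasurable,
      Measure.setLIntegral_rnDeriv h₁ s, Measure.setLIntegral_rnDeriv h₂ t]
  exact (Measure.eq_rnDeriv hF Measure.MutuallySingular.zero_left hwd).symm

lemma klBits_prod (P₁ Q₁ : Measure α) (P₂ Q₂ : Measure β)
    [IsProbabilityMeasure P₁] [IsProbabilityMeasure P₂]
    [IsProbabilityMeasure Q₁] [IsProbabilityMeasure Q₂] :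
    klBits (P₁.prod P₂) (Q₁.prod Q₂) = klBits P₁ Q₁ + klBits P₂ Q₂ := by
  by_cases hac₁ : P₁ ≪ Q₁
  swap
  · simp only [klBits]
    rw [if_neg (fun h => hac₁ (absolutelyContinuous_of_prod h.1).1),
      if_neg (fun h => hac₁ h.1), top_add]
  by_cases hac₂ : P₂ ≪ Q₂
  swap
  · have hneg : ¬ (P₂ ≪ Q₂ ∧ Integrable (fun x => Real.logb 2 (P₂.rnDeriv Q₂ x).toReal) P₂) :=
      fun h => hac₂ h.1
    simp only [klBits]
    rw [if_neg (fun h => hac₂ (absolutelyContinuous_of_prod h.1).2), if_neg hneg, add_top]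
  set f₁ := fun x => Real.logb 2 (P₁.rnDeriv Q₁ x).toReal with hf₁
  set f₂ := fun x => Real.logb 2 (P₂.rnDeriv Q₂ x).toReal with hf₂
  have hf₁m : Measurable f₁ := measurable_logbRn _ _
  have hf₂m : Measurable f₂ := measurable_logbRn _ _
  have hacp : P₁.prod P₂ ≪ Q₁.prod Q₂ := hac₁.prod hac₂
  have hmapfst : (P₁.prod P₂).map Prod.fst = P₁ := by simp
  have hmapsnd : (P₁.prod P₂).map Prod.snd = P₂ := by simp
  have h1 : ∀ᵐ z : α × β ∂(P₁.prod P₂), 0 < P₁.rnDeriv Q₁ z.1 ∧ P₁.rnDeriv Q₁ z.1 ≠ ⊤ := by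
    refine ae_of_ae_map (p := fun x => 0 < P₁.rnDeriv Q₁ x ∧ P₁.rnDeriv Q₁ x ≠ ⊤)
      (measurable_fst (α := α) (β := β)).aemeasurable ?_
    rw [hmapfst]
    filter_upwards [Measure.rnDeriv_pos hac₁, hac₁.ae_le (Measure.rnDeriv_lt_top P₁ Q₁)]
      with x hx hx'
    exact ⟨hx, hx'.ne⟩
  have h2 : ∀ᵐ z : α × β ∂(P₁.prod P₂), 0 < P₂.rnDeriv Q₂ z.2 ∧ P₂.rnDeriv Q₂ z.2 ≠ ⊤ := by
    refine ae_of_ae_map (p := fun x => 0 < P₂.rnDeriv Q₂ x ∧ P₂.rnDeriv Q₂ x ≠ ⊤)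
      (measurable_snd (α := α) (β := β)).aemeasurable ?_
    rw [hmapsnd]
    filter_upwards [Measure.rnDeriv_pos hac₂, hac₂.ae_le (Measure.rnDeriv_lt_top P₂ Q₂)]
      with x hx hx'
    exact ⟨hx, hx'.ne⟩
  have hkey : (fun z => Real.logb 2 ((P₁.prod P₂).rnDeriv (Q₁.prod Q₂) z).toReal)
      =ᵐ[P₁.prod P₂] fun z => f₁ z.1 + f₂ z.2 := by
    filter_upwards [hacp.ae_le (rnDeriv_prod_ae hac₁ hac₂), h1, h2] with z hz h1z h2z
    rw [hz, ENNReal.toReal_mul,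
      Real.logb_mul (ENNReal.toReal_pos h1z.1.ne' h1z.2).ne'
        (ENNReal.toReal_pos h2z.1.ne' h2z.2).ne']
  have g1 : Integrable f₁ P₁ → Integrable (fun z : α × β => f₁ z.1) (P₁.prod P₂) := by
    intro h
    rw [← hmapfst] at h
    exact (integrable_map_measure hf₁m.aestronglyMeasurable
      measurable_fst.aemeasurable).mp h
  have g2 : Integrable f₂ P₂ → Integrable (fun z : α × β => f₂ z.2) (P₁.prod P₂) := by
    intro h
    rw [← hmapsnd] at h
    exact (integrable_map_measure hf₂m.aestronglyMeasurable
      measurable_snd.aemeasurable).mp h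
  haveI hne1 : (ae P₁).NeBot := ae_neBot.mpr (IsProbabilityMeasure.ne_zero P₁)
  haveI hne2 : (ae P₂).NeBot := ae_neBot.mpr (IsProbabilityMeasure.ne_zero P₂)
  have hIff : Integrable (fun z => Real.logb 2 ((P₁.prod P₂).rnDeriv (Q₁.prod Q₂) z).toReal)
      (P₁.prod P₂) ↔ (Integrable f₁ P₁ ∧ Integrable f₂ P₂) := by
    rw [integrable_congr hkey]
    constructor
    · intro h
      constructor
      · obtain ⟨y, hy⟩ := h.prod_left_ae.exists
        have h' : Integrable (fun x => f₁ x + f₂ y + -f₂ y) P₁ := hy.add (integrable_const _)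
        simpa using h'
      · obtain ⟨x, hx⟩ := h.prod_right_ae.exists
        have h' : Integrable (fun y => -f₁ x + (f₁ x + f₂ y)) P₂ :=
          (integrable_const _).add hx
        simpa using h'
    · rintro ⟨hi₁, hi₂⟩
      exact (g1 hi₁).add (g2 hi₂)
  by_cases hi₁ : Integrable f₁ P₁
  swap
  · simp only [klBits]
    rw [if_neg (fun h => hi₁ (hIff.mp h.2).1), if_neg (fun h => hi₁ h.2), top_add]
  by_cases hi₂ : Integrable f₂ P₂
  swap
  · have hneg : ¬ (P₂ ≪ Q₂ ∧ Integrable (fun x => Real.logb 2 (P₂.rnDeriv Q₂ x).toReal) P₂) :=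
      fun h => hi₂ h.2
    simp only [klBits]
    rw [if_neg (fun h => hi₂ (hIff.mp h.2).2), if_neg hneg, add_top]
  have hval : ∫ z, Real.logb 2 ((P₁.prod P₂).rnDeriv (Q₁.prod Q₂) z).toReal ∂(P₁.prod P₂)
      = (∫ x, f₁ x ∂P₁) + ∫ x, f₂ x ∂P₂ := by
    rw [integral_congr_ae hkey, integral_add (g1 hi₁) (g2 hi₂)]
    congr 1
    · conv_rhs => rw [← hmapfst]
      rw [integral_map measurable_fst.aemeasurable hf₁m.aestronglyMeasurable]
    · conv_rhs => rw [← hmapsnd]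
      rw [integral_map measurable_snd.aemeasurable hf₂m.aestronglyMeasurable]
  simp only [klBits]
  rw [if_pos ⟨hacp, hIff.mpr ⟨hi₁, hi₂⟩⟩, if_pos ⟨hac₁, hi₁⟩,
    if_pos ⟨hac₂, hi₂⟩, hval,
    ENNReal.ofReal_add (integral_logbRn_nonneg _ _ hac₁ hi₁)
      (integral_logbRn_nonneg _ _ hac₂ hi₂)]

end ProdKL

section Rearrange
variable {α β γ δ : Type*} [MeasurableSpace α] [MeasurableSpace β] [MeasurableSpace γ]
  [MeasurableSpace δ]

/-- `prodProdProdComm` as a measurable equivalence. -/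
def quadEquiv (α β γ δ : Type*) [MeasurableSpace α] [MeasurableSpace β] [MeasurableSpace γ]
    [MeasurableSpace δ] : (α × β) × γ × δ ≃ᵐ (α × γ) × β × δ where
  toEquiv := Equiv.prodProdProdComm α β γ δ
  measurable_toFun := (measurable_fst.fst.prodMk measurable_snd.fst).prodMk
      (measurable_fst.snd.prodMk measurable_snd.snd)
  measurable_invFun := (measurable_fst.fst.prodMk measurable_snd.fst).prodMk
      (measurable_fst.snd.prodMk measurable_snd.snd)

lemma quadEquiv_coe : ⇑(quadEquiv α β γ δ) = fun p => ((p.1.1, p.2.1), (p.1.2, p.2.2)) := rfl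

lemma measurePreserving_quad (μ₁ : Measure α) (ν₁ : Measure β) (μ₂ : Measure γ)
    (ν₂ : Measure δ) [SFinite μ₁] [SFinite ν₁] [SFinite μ₂] [SFinite ν₂] :
    MeasurePreserving (quadEquiv α β γ δ)
      ((μ₁.prod ν₁).prod (μ₂.prod ν₂)) ((μ₁.prod μ₂).prod (ν₁.prod ν₂)) := by
  have hA := MeasureTheory.measurePreserving_prodAssoc μ₁ ν₁ (μ₂.prod ν₂)
  have hB1 := (MeasureTheory.measurePreserving_prodAssoc ν₁ μ₂ ν₂).symm
    (MeasurableEquiv.prodAssoc)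
  have hB2 : MeasurePreserving (Prod.map (Prod.swap : β × γ → γ × β) (id : δ → δ))
      ((ν₁.prod μ₂).prod ν₂) ((μ₂.prod ν₁).prod ν₂) :=
    (Measure.measurePreserving_swap).prod (MeasurePreserving.id _)
  have hB3 := MeasureTheory.measurePreserving_prodAssoc μ₂ ν₁ ν₂
  have hB := hB3.comp (hB2.comp hB1)
  have hC : MeasurePreserving (Prod.map (id : α → α)
      ((MeasurableEquiv.prodAssoc : (γ × β) × δ ≃ᵐ γ × β × δ) ∘
        (Prod.map (Prod.swap : β × γ → γ × β) (id : δ → δ)) ∘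
        (MeasurableEquiv.prodAssoc.symm : β × γ × δ ≃ᵐ (β × γ) × δ)))
      (μ₁.prod (ν₁.prod (μ₂.prod ν₂))) (μ₁.prod (μ₂.prod (ν₁.prod ν₂))) :=
    (MeasurePreserving.id _).prod hB
  have hD := (MeasureTheory.measurePreserving_prodAssoc μ₁ μ₂ (ν₁.prod ν₂)).symm
    (MeasurableEquiv.prodAssoc)
  exact hD.comp (hC.comp hA)

lemma map_quad (μ₁ : Measure α) (ν₁ : Measure β) (μ₂ : Measure γ) (ν₂ : Measure δ)
    [SFinite μ₁] [SFinite ν₁] [SFinite μ₂] [SFinite ν₂] :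
    ((μ₁.prod ν₁).prod (μ₂.prod ν₂)).map (quadEquiv α β γ δ)
      = (μ₁.prod μ₂).prod (ν₁.prod ν₂) :=
  (measurePreserving_quad μ₁ ν₁ μ₂ ν₂).map_eq

end Rearrange

section MI
variable {Ω Ω' 𝒳 𝒴 𝒴' : Type*} [MeasurableSpace Ω] [MeasurableSpace Ω'] [MeasurableSpace 𝒳]
  [MeasurableSpace 𝒴] [MeasurableSpace 𝒴']

lemma miBits_comp_map (ν : Measure Ω') {F : Ω' → Ω} (hF : Measurable F)
    {X : Ω → 𝒳} {Y : Ω → 𝒴} (hX : Measurable X) (hY : Measurable Y) :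
    miBits (ν.map F) X Y = miBits ν (fun ω => X (F ω)) (fun ω => Y (F ω)) := by
  rw [miBits, miBits, Measure.map_map (hX.prodMk hY) hF, Measure.map_map hX hF,
    Measure.map_map hY hF]
  rfl

lemma miBits_equiv_right (ν : Measure Ω) [IsProbabilityMeasure ν] {X : Ω → 𝒳}
    {Y : Ω → 𝒴} (hX : Measurable X) (hY : Measurable Y) (e : 𝒴 ≃ᵐ 𝒴') :
    miBits ν X (fun ω => e (Y ω)) = miBits ν X Y := by
  have hE : Measurable ((MeasurableEquiv.refl 𝒳).prodCongr e) :=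
    ((MeasurableEquiv.refl 𝒳).prodCongr e).measurable
  have hjoint : ν.map (fun ω => (X ω, e (Y ω)))
      = (ν.map (fun ω => (X ω, Y ω))).map ((MeasurableEquiv.refl 𝒳).prodCongr e) := by
    rw [Measure.map_map hE (hX.prodMk hY)]
    rfl
  have hmarg : ν.map (fun ω => e (Y ω)) = (ν.map Y).map e := by
    rw [Measure.map_map e.measurable hY]
    rfl
  haveI : IsProbabilityMeasure (ν.map (fun ω => (X ω, Y ω))) :=
    Measure.isProbabilityMeasure_map (hX.prodMk hY).aemeasurable
  haveI : IsProbabilityMeasure (ν.map X) := Measure.isProbabilityMeasure_map hX.aemeasurable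
  haveI : IsProbabilityMeasure (ν.map Y) := Measure.isProbabilityMeasure_map hY.aemeasurable
  have hprod : (ν.map X).prod ((ν.map Y).map e)
      = ((ν.map X).prod (ν.map Y)).map ((MeasurableEquiv.refl 𝒳).prodCongr e) := by
    have h := Measure.map_prod_map (ν.map X) (ν.map Y) measurable_id e.measurable
    rw [Measure.map_id] at h
    rw [h]
    rfl
  rw [miBits, miBits, hjoint, hmarg, hprod, klBits_map_equiv]
end MI

section MIProd
variable {Ω₁ Ω₂ 𝒳₁ 𝒳₂ 𝒴₁ 𝒴₂ : Type*} [MeasurableSpace Ω₁] [MeasurableSpace Ω₂]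
  [MeasurableSpace 𝒳₁] [MeasurableSpace 𝒳₂] [MeasurableSpace 𝒴₁] [MeasurableSpace 𝒴₂]

lemma miBits_prod (ρ₁ : Measure Ω₁) (ρ₂ : Measure Ω₂)
    [IsProbabilityMeasure ρ₁] [IsProbabilityMeasure ρ₂]
    {X₁ : Ω₁ → 𝒳₁} {Y₁ : Ω₁ → 𝒴₁} {X₂ : Ω₂ → 𝒳₂} {Y₂ : Ω₂ → 𝒴₂}
    (hX₁ : Measurable X₁) (hY₁ : Measurable Y₁) (hX₂ : Measurable X₂) (hY₂ : Measurable Y₂) :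
    miBits (ρ₁.prod ρ₂) (fun p => (X₁ p.1, X₂ p.2)) (fun p => (Y₁ p.1, Y₂ p.2))
      = miBits ρ₁ X₁ Y₁ + miBits ρ₂ X₂ Y₂ := by
  haveI h₁ : IsProbabilityMeasure (ρ₁.map (fun ω => (X₁ ω, Y₁ ω))) :=
    Measure.isProbabilityMeasure_map (hX₁.prodMk hY₁).aemeasurable
  haveI h₂ : IsProbabilityMeasure (ρ₂.map (fun ω => (X₂ ω, Y₂ ω))) :=
    Measure.isProbabilityMeasure_map (hX₂.prodMk hY₂).aemeasurable
  haveI : IsProbabilityMeasure (ρ₁.map X₁) := Measure.isProbabilityMeasure_map hX₁.aemeasurable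
  haveI : IsProbabilityMeasure (ρ₁.map Y₁) := Measure.isProbabilityMeasure_map hY₁.aemeasurable
  haveI : IsProbabilityMeasure (ρ₂.map X₂) := Measure.isProbabilityMeasure_map hX₂.aemeasurable
  haveI : IsProbabilityMeasure (ρ₂.map Y₂) := Measure.isProbabilityMeasure_map hY₂.aemeasurable
  have hjoint : (ρ₁.prod ρ₂).map (fun p => ((X₁ p.1, X₂ p.2), (Y₁ p.1, Y₂ p.2)))
      = ((ρ₁.map (fun ω => (X₁ ω, Y₁ ω))).prod (ρ₂.map (fun ω => (X₂ ω, Y₂ ω)))).map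
          (quadEquiv 𝒳₁ 𝒴₁ 𝒳₂ 𝒴₂) := by
    rw [Measure.map_prod_map _ _ (hX₁.prodMk hY₁) (hX₂.prodMk hY₂),
      Measure.map_map (quadEquiv 𝒳₁ 𝒴₁ 𝒳₂ 𝒴₂).measurable
        ((hX₁.prodMk hY₁).prodMap (hX₂.prodMk hY₂))]
    rfl
  have hmX : (ρ₁.prod ρ₂).map (fun p => (X₁ p.1, X₂ p.2)) = (ρ₁.map X₁).prod (ρ₂.map X₂) := by
    rw [Measure.map_prod_map _ _ hX₁ hX₂]
    rfl
  have hmY : (ρ₁.prod ρ₂).map (fun p => (Y₁ p.1, Y₂ p.2)) = (ρ₁.map Y₁).prod (ρ₂.map Y₂) := by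
    rw [Measure.map_prod_map _ _ hY₁ hY₂]
    rfl
  have hprod : ((ρ₁.map X₁).prod (ρ₂.map X₂)).prod ((ρ₁.map Y₁).prod (ρ₂.map Y₂))
      = (((ρ₁.map X₁).prod (ρ₁.map Y₁)).prod ((ρ₂.map X₂).prod (ρ₂.map Y₂))).map
          (quadEquiv 𝒳₁ 𝒴₁ 𝒳₂ 𝒴₂) := (map_quad _ _ _ _).symm
  rw [miBits, miBits, miBits, hjoint, hmX, hmY, hprod, klBits_map_equiv, klBits_prod]

end MIProd


/-- **Subadditivity of the excess functional information** (Proposition 3.3):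
if `(X₁,Y₁) ⫫ (X₂,Y₂)`, then `Ψ((X₁,X₂) → (Y₁,Y₂)) ≤ Ψ(X₁ → Y₁) + Ψ(X₂ → Y₂)`. -/
theorem excessFI_subadditivity
    {Ω 𝒳₁ 𝒳₂ 𝒴₁ 𝒴₂ : Type*} [MeasurableSpace Ω]
    [MeasurableSpace 𝒳₁] [MeasurableSpace 𝒳₂] [MeasurableSpace 𝒴₁] [MeasurableSpace 𝒴₂]
    (μ : Measure Ω) [IsProbabilityMeasure μ]
    (X₁ : Ω → 𝒳₁) (X₂ : Ω → 𝒳₂) (Y₁ : Ω → 𝒴₁) (Y₂ : Ω → 𝒴₂)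
    (hX₁ : Measurable X₁) (hX₂ : Measurable X₂)
    (hY₁ : Measurable Y₁) (hY₂ : Measurable Y₂)
    -- (X₁,Y₁) ⫫ (X₂,Y₂)
    (hindep : IndepFun (fun ω => (X₁ ω, Y₁ ω)) (fun ω => (X₂ ω, Y₂ ω)) μ) :
    excessFIRV μ (fun ω => (X₁ ω, X₂ ω)) (fun ω => (Y₁ ω, Y₂ ω)) ≤
      excessFIRV μ X₁ Y₁ + excessFIRV μ X₂ Y₂ := by
  rw [excessFIRV, excessFIRV, excessFIRV, excessFI, excessFI, excessFI]
  refine le_sInf_add_sInf ?_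
  rintro r₁ ⟨ρ₁, hρ₁p, hρ₁m, hρ₁i, ⟨g₁, hg₁m, hg₁⟩, rfl⟩
  rintro r₂ ⟨ρ₂, hρ₂p, hρ₂m, hρ₂i, ⟨g₂, hg₂m, hg₂⟩, rfl⟩
  haveI := hρ₁p; haveI := hρ₂p
  set e : (ℝ × ℝ) ≃ᵐ ℝ := realPairEquiv with he
  set F : (𝒳₁ × 𝒴₁ × ℝ) × (𝒳₂ × 𝒴₂ × ℝ) → (𝒳₁ × 𝒳₂) × (𝒴₁ × 𝒴₂) × ℝ :=
    fun p => ((p.1.1, p.2.1), (p.1.2.1, p.2.2.1), e (p.1.2.2, p.2.2.2)) with hFdef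
  have hFm : Measurable F :=
    (measurable_fst.fst.prodMk measurable_snd.fst).prodMk
      ((measurable_fst.snd.fst.prodMk measurable_snd.snd.fst).prodMk
        (e.measurable.comp (measurable_fst.snd.snd.prodMk measurable_snd.snd.snd)))
  set ρ : Measure ((𝒳₁ × 𝒳₂) × (𝒴₁ × 𝒴₂) × ℝ) := (ρ₁.prod ρ₂).map F with hρdef
  haveI : IsProbabilityMeasure ρ := Measure.isProbabilityMeasure_map hFm.aemeasurable
  -- projections
  have hπ : Measurable (fun q : 𝒳₁ × 𝒴₁ × ℝ => (q.1, q.2.1)) :=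
    measurable_fst.prodMk measurable_snd.fst
  have hπ' : Measurable (fun q : 𝒳₂ × 𝒴₂ × ℝ => (q.1, q.2.1)) :=
    measurable_fst.prodMk measurable_snd.fst
  -- the marginal condition
  have hν : μ.map (fun ω => ((X₁ ω, X₂ ω), (Y₁ ω, Y₂ ω)))
      = ((μ.map (fun ω => (X₁ ω, Y₁ ω))).prod (μ.map (fun ω => (X₂ ω, Y₂ ω)))).map
          (quadEquiv 𝒳₁ 𝒴₁ 𝒳₂ 𝒴₂) := by
    rw [← (indepFun_iff_map_prod_eq_prod_map_map (hX₁.prodMk hY₁).aemeasurable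
        (hX₂.prodMk hY₂).aemeasurable).mp hindep,
      Measure.map_map (quadEquiv 𝒳₁ 𝒴₁ 𝒳₂ 𝒴₂).measurable
        ((hX₁.prodMk hY₁).prodMk (hX₂.prodMk hY₂))]
    rfl
  have hmarg : ρ.map (fun p => (p.1, p.2.1))
      = μ.map (fun ω => ((X₁ ω, X₂ ω), (Y₁ ω, Y₂ ω))) := by
    rw [hρdef, Measure.map_map (measurable_fst.prodMk measurable_snd.fst) hFm]
    have hfun : ((fun p : (𝒳₁ × 𝒳₂) × (𝒴₁ × 𝒴₂) × ℝ => (p.1, p.2.1)) ∘ F)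
        = (quadEquiv 𝒳₁ 𝒴₁ 𝒳₂ 𝒴₂) ∘ (Prod.map (fun q : 𝒳₁ × 𝒴₁ × ℝ => (q.1, q.2.1))
            (fun q : 𝒳₂ × 𝒴₂ × ℝ => (q.1, q.2.1))) := rfl
    rw [hfun, ← Measure.map_map (quadEquiv 𝒳₁ 𝒴₁ 𝒳₂ 𝒴₂).measurable (hπ.prodMap hπ'),
      ← Measure.map_prod_map _ _ hπ hπ', hρ₁m, hρ₂m, hν]
  -- independence of X and Z under ρ
  haveI : IsProbabilityMeasure (ρ₁.map (fun q : 𝒳₁ × 𝒴₁ × ℝ => q.1)) :=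
    Measure.isProbabilityMeasure_map measurable_fst.aemeasurable
  haveI : IsProbabilityMeasure (ρ₂.map (fun q : 𝒳₂ × 𝒴₂ × ℝ => q.1)) :=
    Measure.isProbabilityMeasure_map measurable_fst.aemeasurable
  haveI : IsProbabilityMeasure (ρ₁.map (fun q : 𝒳₁ × 𝒴₁ × ℝ => q.2.2)) :=
    Measure.isProbabilityMeasure_map measurable_snd.snd.aemeasurable
  haveI : IsProbabilityMeasure (ρ₂.map (fun q : 𝒳₂ × 𝒴₂ × ℝ => q.2.2)) :=
    Measure.isProbabilityMeasure_map measurable_snd.snd.aemeasurable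
  have hσ₁ : ρ₁.map (fun q : 𝒳₁ × 𝒴₁ × ℝ => (q.1, q.2.2))
      = (ρ₁.map (fun q => q.1)).prod (ρ₁.map (fun q => q.2.2)) :=
    (indepFun_iff_map_prod_eq_prod_map_map measurable_fst.aemeasurable
      measurable_snd.snd.aemeasurable).mp hρ₁i
  have hσ₂ : ρ₂.map (fun q : 𝒳₂ × 𝒴₂ × ℝ => (q.1, q.2.2))
      = (ρ₂.map (fun q => q.1)).prod (ρ₂.map (fun q => q.2.2)) :=
    (indepFun_iff_map_prod_eq_prod_map_map measurable_fst.aemeasurable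
      measurable_snd.snd.aemeasurable).mp hρ₂i
  have hσm : Measurable (fun q : 𝒳₁ × 𝒴₁ × ℝ => (q.1, q.2.2)) :=
    measurable_fst.prodMk measurable_snd.snd
  have hσm' : Measurable (fun q : 𝒳₂ × 𝒴₂ × ℝ => (q.1, q.2.2)) :=
    measurable_fst.prodMk measurable_snd.snd
  have hind : IndepFun (fun p : (𝒳₁ × 𝒳₂) × (𝒴₁ × 𝒴₂) × ℝ => p.1) (fun p => p.2.2) ρ := by
    rw [indepFun_iff_map_prod_eq_prod_map_map measurable_fst.aemeasurable
      measurable_snd.snd.aemeasurable]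
    have hXZ : ρ.map (fun p => (p.1, p.2.2))
        = ((ρ₁.map (fun q => q.1)).prod (ρ₂.map (fun q => q.1))).prod
            (((ρ₁.map (fun q => q.2.2)).prod (ρ₂.map (fun q => q.2.2))).map e) := by
      rw [hρdef, Measure.map_map (measurable_fst.prodMk measurable_snd.snd) hFm]
      have hfun : ((fun p : (𝒳₁ × 𝒳₂) × (𝒴₁ × 𝒴₂) × ℝ => (p.1, p.2.2)) ∘ F)
          = ((Prod.map (id : 𝒳₁ × 𝒳₂ → 𝒳₁ × 𝒳₂) ⇑e) ∘ ⇑(quadEquiv 𝒳₁ ℝ 𝒳₂ ℝ))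
            ∘ (Prod.map (fun q : 𝒳₁ × 𝒴₁ × ℝ => (q.1, q.2.2))
                (fun q : 𝒳₂ × 𝒴₂ × ℝ => (q.1, q.2.2))) := rfl
      rw [hfun,
        ← Measure.map_map ((measurable_id.prodMap e.measurable).comp
          (quadEquiv 𝒳₁ ℝ 𝒳₂ ℝ).measurable) (hσm.prodMap hσm'),
        ← Measure.map_prod_map _ _ hσm hσm', hσ₁, hσ₂,
        ← Measure.map_map (measurable_id.prodMap e.measurable)
          (quadEquiv 𝒳₁ ℝ 𝒳₂ ℝ).measurable,
        map_quad, ← Measure.map_prod_map _ _ measurable_id e.measurable, Measure.map_id]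
    have hXm : ρ.map (fun p : (𝒳₁ × 𝒳₂) × (𝒴₁ × 𝒴₂) × ℝ => p.1)
        = (ρ₁.map (fun q => q.1)).prod (ρ₂.map (fun q => q.1)) := by
      rw [hρdef, Measure.map_map measurable_fst hFm]
      have hfun : ((fun p : (𝒳₁ × 𝒳₂) × (𝒴₁ × 𝒴₂) × ℝ => p.1) ∘ F)
          = Prod.map (fun q : 𝒳₁ × 𝒴₁ × ℝ => q.1) (fun q : 𝒳₂ × 𝒴₂ × ℝ => q.1) := rfl
      rw [hfun, ← Measure.map_prod_map _ _ measurable_fst measurable_fst]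
    have hZm : ρ.map (fun p : (𝒳₁ × 𝒳₂) × (𝒴₁ × 𝒴₂) × ℝ => p.2.2)
        = ((ρ₁.map (fun q => q.2.2)).prod (ρ₂.map (fun q => q.2.2))).map e := by
      rw [hρdef, Measure.map_map measurable_snd.snd hFm]
      have hfun : ((fun p : (𝒳₁ × 𝒳₂) × (𝒴₁ × 𝒴₂) × ℝ => p.2.2) ∘ F)
          = ⇑e ∘ Prod.map (fun q : 𝒳₁ × 𝒴₁ × ℝ => q.2.2)
              (fun q : 𝒳₂ × 𝒴₂ × ℝ => q.2.2) := rfl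
      rw [hfun, ← Measure.map_map e.measurable
          (measurable_snd.snd.prodMap measurable_snd.snd),
        ← Measure.map_prod_map _ _ measurable_snd.snd measurable_snd.snd]
    rw [hXZ, hXm, hZm]
  -- the function g
  set g : (𝒳₁ × 𝒳₂) × ℝ → 𝒴₁ × 𝒴₂ :=
    fun xz => (g₁ (xz.1.1, (e.symm xz.2).1), g₂ (xz.1.2, (e.symm xz.2).2)) with hgdef
  have hgm : Measurable g :=
    (hg₁m.comp (measurable_fst.fst.prodMk
        ((e.symm.measurable.comp measurable_snd).fst))).prodMk
      (hg₂m.comp (measurable_fst.snd.prodMk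
        ((e.symm.measurable.comp measurable_snd).snd)))
  have hπ₁m : Measurable
      (fun p : (𝒳₁ × 𝒳₂) × (𝒴₁ × 𝒴₂) × ℝ => (p.1.1, p.2.1.1, (e.symm p.2.2).1)) :=
    measurable_fst.fst.prodMk (measurable_snd.fst.fst.prodMk
      ((e.symm.measurable.comp measurable_snd.snd).fst))
  have hπ₂m : Measurable
      (fun p : (𝒳₁ × 𝒳₂) × (𝒴₁ × 𝒴₂) × ℝ => (p.1.2, p.2.1.2, (e.symm p.2.2).2)) :=
    measurable_fst.snd.prodMk (measurable_snd.fst.snd.prodMk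
      ((e.symm.measurable.comp measurable_snd.snd).snd))
  have hπ₁ : ρ.map (fun p => (p.1.1, p.2.1.1, (e.symm p.2.2).1)) = ρ₁ := by
    rw [hρdef, Measure.map_map hπ₁m hFm]
    have hfun : ((fun p : (𝒳₁ × 𝒳₂) × (𝒴₁ × 𝒴₂) × ℝ =>
        (p.1.1, p.2.1.1, (e.symm p.2.2).1)) ∘ F) = Prod.fst := by
      funext p
      show (p.1.1, p.1.2.1, (e.symm (e (p.1.2.2, p.2.2.2))).1) = p.1
      rw [MeasurableEquiv.symm_apply_apply]
    rw [hfun]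
    simp
  have hπ₂ : ρ.map (fun p => (p.1.2, p.2.1.2, (e.symm p.2.2).2)) = ρ₂ := by
    rw [hρdef, Measure.map_map hπ₂m hFm]
    have hfun : ((fun p : (𝒳₁ × 𝒳₂) × (𝒴₁ × 𝒴₂) × ℝ =>
        (p.1.2, p.2.1.2, (e.symm p.2.2).2)) ∘ F) = Prod.snd := by
      funext p
      show (p.2.1, p.2.2.1, (e.symm (e (p.1.2.2, p.2.2.2))).2) = p.2
      rw [MeasurableEquiv.symm_apply_apply]
    rw [hfun]
    simp
  have h₁ := ae_eq_comp (μ := ρ) (g := fun q : 𝒳₁ × 𝒴₁ × ℝ => q.2.1)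
    (g' := fun q : 𝒳₁ × 𝒴₁ × ℝ => g₁ (q.1, q.2.2)) hπ₁m.aemeasurable
    (by rw [hπ₁]; exact hg₁)
  have h₂ := ae_eq_comp (μ := ρ) (g := fun q : 𝒳₂ × 𝒴₂ × ℝ => q.2.1)
    (g' := fun q : 𝒳₂ × 𝒴₂ × ℝ => g₂ (q.1, q.2.2)) hπ₂m.aemeasurable
    (by rw [hπ₂]; exact hg₂)
  have hgae : (fun p : (𝒳₁ × 𝒳₂) × (𝒴₁ × 𝒴₂) × ℝ => p.2.1) =ᵐ[ρ] fun p => g (p.1, p.2.2) := by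
    filter_upwards [h₁, h₂] with p hp₁ hp₂
    exact Prod.ext hp₁ hp₂
  -- the conditional mutual information bound
  set W : (𝒳₁ × 𝒴₁ × ℝ) × (𝒳₂ × 𝒴₂ × ℝ) → (ℝ × 𝒴₁) × (ℝ × 𝒴₂) :=
    fun p => ((p.1.2.2, p.1.2.1), (p.2.2.2, p.2.2.1)) with hWdef
  have hWm : Measurable W :=
    (measurable_fst.snd.snd.prodMk measurable_fst.snd.fst).prodMk
      (measurable_snd.snd.snd.prodMk measurable_snd.snd.fst)
  set ψ : (ℝ × 𝒴₁) × (ℝ × 𝒴₂) ≃ᵐ ℝ × (𝒴₁ × 𝒴₂) :=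
    (quadEquiv ℝ 𝒴₁ ℝ 𝒴₂).trans (e.prodCongr (MeasurableEquiv.refl (𝒴₁ × 𝒴₂))) with hψdef
  have hA : miBits ρ (fun p => p.1) (fun p => (p.2.2, p.2.1))
      = miBits ρ₁ (fun q => q.1) (fun q => (q.2.2, q.2.1))
        + miBits ρ₂ (fun q => q.1) (fun q => (q.2.2, q.2.1)) := by
    have s1 : miBits ρ (fun p => p.1) (fun p => (p.2.2, p.2.1))
        = miBits (ρ₁.prod ρ₂) (fun ω : (𝒳₁ × 𝒴₁ × ℝ) × (𝒳₂ × 𝒴₂ × ℝ) => (ω.1.1, ω.2.1))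
            (fun ω => ψ (W ω)) := by
      rw [hρdef]
      exact miBits_comp_map _ hFm measurable_fst
        (measurable_snd.snd.prodMk measurable_snd.fst)
    have s2 := miBits_equiv_right (ρ₁.prod ρ₂)
      (X := fun ω : (𝒳₁ × 𝒴₁ × ℝ) × (𝒳₂ × 𝒴₂ × ℝ) => (ω.1.1, ω.2.1)) (Y := W)
      (measurable_fst.fst.prodMk measurable_snd.fst) hWm ψ
    have s3 : miBits (ρ₁.prod ρ₂)
        (fun ω : (𝒳₁ × 𝒴₁ × ℝ) × (𝒳₂ × 𝒴₂ × ℝ) => (ω.1.1, ω.2.1)) W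
        = miBits ρ₁ (fun q => q.1) (fun q => (q.2.2, q.2.1))
          + miBits ρ₂ (fun q => q.1) (fun q => (q.2.2, q.2.1)) :=
      miBits_prod ρ₁ ρ₂ measurable_fst (measurable_snd.snd.prodMk measurable_snd.fst)
        measurable_fst (measurable_snd.snd.prodMk measurable_snd.fst)
    exact s1.trans (s2.trans s3)
  have hB : miBits ρ (fun p => p.1) (fun p => p.2.1)
      = miBits ρ₁ (fun q => q.1) (fun q => q.2.1)
        + miBits ρ₂ (fun q => q.1) (fun q => q.2.1) := by
    have s1 : miBits ρ (fun p => p.1) (fun p => p.2.1)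
        = miBits (ρ₁.prod ρ₂) (fun ω : (𝒳₁ × 𝒴₁ × ℝ) × (𝒳₂ × 𝒴₂ × ℝ) => (ω.1.1, ω.2.1))
            (fun ω => (ω.1.2.1, ω.2.2.1)) := by
      rw [hρdef]
      exact miBits_comp_map _ hFm measurable_fst measurable_snd.fst
    exact s1.trans (miBits_prod ρ₁ ρ₂ measurable_fst measurable_snd.fst
      measurable_fst measurable_snd.fst)
  have final : cmiBits ρ (fun p => p.1) (fun p => p.2.2) (fun p => p.2.1)
      ≤ cmiBits ρ₁ (fun p => p.1) (fun p => p.2.2) (fun p => p.2.1)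
        + cmiBits ρ₂ (fun p => p.1) (fun p => p.2.2) (fun p => p.2.1) := by
    have e0 : cmiBits ρ (fun p => p.1) (fun p => p.2.2) (fun p => p.2.1)
        = miBits ρ (fun p => p.1) (fun p => (p.2.2, p.2.1))
          - miBits ρ (fun p => p.1) (fun p => p.2.1) := rfl
    have e1 : cmiBits ρ₁ (fun p => p.1) (fun p => p.2.2) (fun p => p.2.1)
        = miBits ρ₁ (fun q => q.1) (fun q => (q.2.2, q.2.1))
          - miBits ρ₁ (fun q => q.1) (fun q => q.2.1) := rfl
    have e2 : cmiBits ρ₂ (fun p => p.1) (fun p => p.2.2) (fun p => p.2.1)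
        = miBits ρ₂ (fun q => q.1) (fun q => (q.2.2, q.2.1))
          - miBits ρ₂ (fun q => q.1) (fun q => q.2.1) := rfl
    rw [e0, e1, e2, hA, hB]
    exact tsub_add_tsub_le'
  refine le_trans (sInf_le ?_) final
  exact ⟨ρ, inferInstance, hmarg, hind, ⟨g, hgm, hgae⟩, rfl⟩
end
end
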